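/- Let Γ be a distance-regular graph with valency k and diameter 3. Then the second largest eigenvalue θ₁ of the adjacency matrix of Γ satisfies θ₁ ≥ min{(a₁ + √(a₁² + 4k))/2, a₃}. -/

import Mathlib

open Finset SimpleGraph

/-- `G` is a distance-regular graph with diameter `D` and intersection numbers
`b i`, `c i`, `a i` (so valency `k = b 0` and `a i = k - b i - c i`). -/
structure IsDRG {V : Type*} [Fintype V] (G : SimpleGraph V) (D : ℕ)
    (b c a : ℕ → ℕ) : Prop where
  connected : G.Connected
  le_diam : ∀ x y : V, G.dist x y ≤ D
  exists_diam : ∃ x y : V, G.dist x y = D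
  card_b : ∀ i, i ≤ D → ∀ x y : V, G.dist x y = i →
      Nat.card {z : V | G.Adj y z ∧ G.dist x z = i + 1} = b i
  card_c : ∀ i, i ≤ D → ∀ x y : V, G.dist x y = i →
      Nat.card {z : V | G.Adj y z ∧ G.dist x z = i - 1} = c i
  card_a : ∀ i, i ≤ D → ∀ x y : V, G.dist x y = i →
      Nat.card {z : V | G.Adj y z ∧ G.dist x z = i} = a i

/-- `θ` is an eigenvalue of the adjacency matrix of `G`. -/
def IsEig {V : Type*} [Fintype V] [DecidableEq V] (G : SimpleGraph V)
    [DecidableRel G.Adj] (θ : ℝ) : Prop :=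
  ∃ v : V → ℝ, v ≠ 0 ∧ (G.adjMatrix ℝ).mulVec v = θ • v

/-- `θ` is the second largest eigenvalue of `G` (`k` being the largest). -/
def IsSecondLargestEig {V : Type*} [Fintype V] [DecidableEq V] (G : SimpleGraph V)
    [DecidableRel G.Adj] (k θ : ℝ) : Prop :=
  IsEig G θ ∧ θ < k ∧ ∀ η : ℝ, IsEig G η → η ≠ k → η ≤ θ

/-- `θ` is the smallest eigenvalue of `G`. -/
def IsSmallestEig {V : Type*} [Fintype V] [DecidableEq V] (G : SimpleGraph V)
    [DecidableRel G.Adj] (θ : ℝ) : Prop :=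
  IsEig G θ ∧ ∀ η : ℝ, IsEig G η → θ ≤ η

/-- The multiplicity of `θ` as an eigenvalue of the adjacency matrix of `G`. -/
noncomputable def eigMult {V : Type*} [Fintype V] [DecidableEq V] (G : SimpleGraph V)
    [DecidableRel G.Adj] (θ : ℝ) : ℕ :=
  Module.finrank ℝ ↥(Module.End.eigenspace (Matrix.toLin' (G.adjMatrix ℝ)) θ)


open Matrix

private lemma natCard_set_eq' {V : Type*} [Fintype V] (P : V → Prop) [DecidablePred P] :
    Nat.card {z : V | P z} = (Finset.univ.filter P).card := by
  simp [Nat.card_eq_fintype_card, Fintype.card_subtype]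

lemma perron {V : Type*} [Fintype V] [DecidableEq V] (G : SimpleGraph V) [DecidableRel G.Adj]
    {k : ℕ} (hc : G.Connected) (hreg : ∀ z : V, G.degree z = k)
    {v : V → ℝ} (hv : (G.adjMatrix ℝ).mulVec v = (k : ℝ) • v) (x y : V) : v x = v y := by
  have hne : (Finset.univ : Finset V).Nonempty := ⟨x, mem_univ x⟩
  obtain ⟨x0, -, hx0⟩ := Finset.exists_max_image univ v hne
  have hx0' : ∀ z : V, v z ≤ v x0 := fun z => hx0 z (mem_univ z)
  have hmv : ∀ z : V, ∑ w ∈ G.neighborFinset z, v w = (k : ℝ) * v z := by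
    intro z
    have := congrFun hv z
    rwa [SimpleGraph.adjMatrix_mulVec_apply] at this
  have step : ∀ u w : V, G.Adj u w → v u = v x0 → v w = v x0 := by
    intro u w huw hu
    by_contra hne'
    have hlt : v w < v x0 := lt_of_le_of_ne (hx0' w) hne'
    have hsumlt : ∑ z ∈ G.neighborFinset u, v z < ∑ z ∈ G.neighborFinset u, v x0 := by
      apply Finset.sum_lt_sum (fun z _ => hx0' z)
      exact ⟨w, by simp [huw], hlt⟩
    rw [hmv u, hu, Finset.sum_const, nsmul_eq_mul] at hsumlt
    rw [SimpleGraph.card_neighborFinset_eq_degree, hreg u] at hsumlt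
    exact lt_irrefl _ hsumlt
  have main : ∀ (u w : V) (p : G.Walk u w), v u = v x0 → v w = v x0 := by
    intro u w p
    induction p with
    | nil => exact id
    | cons h p ih => exact fun hu => ih (step _ _ h hu)
  have key : ∀ z : V, v z = v x0 := by
    intro z
    obtain ⟨p⟩ := hc.preconnected x0 z
    exact main _ _ p rfl
  rw [key x, key y]

lemma rayleigh {V : Type*} [Fintype V] [DecidableEq V] (G : SimpleGraph V) [DecidableRel G.Adj]
    {k : ℕ} {θ1 : ℝ} (hc : G.Connected) (hreg : ∀ z : V, G.degree z = k)
    (hub : ∀ η : ℝ, IsEig G η → η ≠ (k : ℝ) → η ≤ θ1)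
    (v : V → ℝ) (hsum : ∑ z : V, v z = 0) :
    v ⬝ᵥ ((G.adjMatrix ℝ) *ᵥ v) ≤ θ1 * (v ⬝ᵥ v) := by
  classical
  have hne : Nonempty V := hc.nonempty
  obtain ⟨z0⟩ := hne
  set A := G.adjMatrix ℝ with hAdef
  have hA : A.IsHermitian := by
    unfold Matrix.IsHermitian
    ext i j
    simp [hAdef, Matrix.conjTranspose_apply, SimpleGraph.adjMatrix_apply, SimpleGraph.adj_comm]
  set B := hA.eigenvectorBasis with hB
  set lam := hA.eigenvalues with hlam
  let v' : EuclideanSpace ℝ V := (WithLp.equiv 2 _).symm v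
  set c : V → ℝ := fun i => inner ℝ (B i) v' with hc'
  have hrepr : ∑ i, c i • B i = v' := B.sum_repr' v'
  have hAv : ∀ i, A *ᵥ ⇑(B i) = lam i • ⇑(B i) := hA.mulVec_eigenvectorBasis
  -- dot product = inner
  have hdot : ∀ f g : V → ℝ, f ⬝ᵥ g =
      (inner ℝ ((WithLp.equiv 2 _).symm f) ((WithLp.equiv 2 _).symm g) : ℝ) := by
    intro f g
    simp [dotProduct, PiLp.inner_apply, RCLike.inner_apply, conj_trivial, mul_comm]
  -- the function equation version of hrepr
  have hreprf : v = ∑ i, c i • ⇑(B i) := by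
    have := congrArg (WithLp.equiv 2 (V → ℝ)) hrepr
    simpa [v'] using this.symm
  have hAvsum : A *ᵥ v = ∑ i, (c i * lam i) • ⇑(B i) := by
    conv_lhs => rw [hreprf]
    have hms := map_sum A.mulVecLin (fun i => c i • ⇑(B i)) univ
    simp only [Matrix.mulVecLin_apply] at hms
    rw [hms]
    refine Finset.sum_congr rfl (fun i _ => ?_)
    rw [Matrix.mulVec_smul, hAv i, smul_smul]
  have hAvsum' : ((WithLp.equiv 2 (V → ℝ)).symm (A *ᵥ v) : EuclideanSpace ℝ V)
      = ∑ i, (c i * lam i) • B i := by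
    apply (WithLp.equiv 2 (V → ℝ)).injective
    simpa using hAvsum
  -- compute inner products via orthonormality
  have horth := B.orthonormal
  have hVA : v ⬝ᵥ (A *ᵥ v) = ∑ i, c i * (c i * lam i) := by
    rw [hdot]
    show (inner ℝ v' ((WithLp.equiv 2 (V → ℝ)).symm (A *ᵥ v)) : ℝ) = _
    rw [show ((WithLp.equiv 2 (V → ℝ)).symm (A *ᵥ v) : EuclideanSpace ℝ V) = ∑ i, (c i * lam i) • B i from hAvsum']
    conv_lhs => rw [← hrepr]
    rw [horth.inner_sum]
    simp
  have hVV : v ⬝ᵥ v = ∑ i, c i * c i := by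
    rw [hdot]
    show (inner ℝ v' v' : ℝ) = _
    conv_lhs => rw [← hrepr]
    rw [horth.inner_sum]
    simp
  rw [hVA, hVV, Finset.mul_sum]
  apply Finset.sum_le_sum
  intro i _
  rcases eq_or_ne (c i) 0 with h0 | h0
  · simp [h0]
  by_cases hk : lam i = (k : ℝ)
  · -- eigenvector is constant, so c i = 0, contradiction
    exfalso
    apply h0
    have hconst : ∀ p q : V, (⇑(B i) : V → ℝ) p = ⇑(B i) q :=
      fun p q => perron G hc hreg (hk ▸ hAv i) p q
    have : c i = ∑ z : V, (⇑(B i) z) * v z := by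
      rw [hc']
      simp [PiLp.inner_apply, RCLike.inner_apply, conj_trivial, v', mul_comm]
    rw [this]
    calc ∑ z : V, (⇑(B i) z) * v z = ∑ z : V, (⇑(B i) z0) * v z :=
          Finset.sum_congr rfl (fun z _ => by rw [hconst z z0])
      _ = (⇑(B i) z0) * ∑ z : V, v z := by rw [Finset.mul_sum]
      _ = 0 := by rw [hsum, mul_zero]
  · have hle : lam i ≤ θ1 := by
      apply hub _ _ hk
      refine ⟨⇑(B i), ?_, hAv i⟩
      intro hzero
      have h1 : ‖B i‖ = 1 := horth.1 i
      rw [show (B i : EuclideanSpace ℝ V) = (WithLp.equiv 2 (V → ℝ)).symm (⇑(B i)) from rfl,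
        hzero] at h1
      simp at h1
    calc c i * (c i * lam i) = lam i * (c i * c i) := by ring
      _ ≤ θ1 * (c i * c i) := mul_le_mul_of_nonneg_right hle (mul_self_nonneg _)

/-- The second largest eigenvalue of a distance-regular graph with diameter `3`
is at least `min{(a₁ + √(a₁² + 4k))/2, a₃}`. -/
theorem stmt4 {V : Type*} [Fintype V] [DecidableEq V] (G : SimpleGraph V)
    [DecidableRel G.Adj] (b c a : ℕ → ℕ) (hG : IsDRG G 3 b c a)
    (θ1 : ℝ) (hθ1 : IsSecondLargestEig G (b 0) θ1) :
    θ1 ≥ min (((a 1 : ℝ) + Real.sqrt ((a 1 : ℝ) ^ 2 + 4 * b 0)) / 2) ((a 3 : ℝ)) := by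
  classical
  open Matrix in
  obtain ⟨hGc, hle, ⟨x, y, hxy⟩, hcb, hcc, hca⟩ := hG
  -- abbreviations
  set k : ℝ := (b 0 : ℝ) with hk
  set a1 : ℝ := (a 1 : ℝ) with ha1
  set a3 : ℝ := (a 3 : ℝ) with ha3
  set t : ℝ := Real.sqrt (a1 ^ 2 + 4 * k) with hts
  set μ : ℝ := (a1 + t) / 2 with hμs
  -- adjacency gives dist one
  have hone : ∀ u w : V, G.Adj u w → G.dist u w = 1 :=
    fun u w h => SimpleGraph.dist_eq_one_iff_adj.mpr h
  -- regularity
  have hdeg : ∀ z : V, G.degree z = b 0 := by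
    intro z
    have h := hcb 0 (by norm_num) z z (SimpleGraph.dist_self)
    rw [natCard_set_eq'] at h
    rw [← h, ← SimpleGraph.card_neighborFinset_eq_degree]
    congr 1
    ext w
    simp only [mem_filter, mem_univ, true_and, mem_neighborFinset, zero_add]
    constructor
    · exact fun hw => ⟨hw, hone _ _ hw⟩
    · exact fun hw => hw.1
  -- x ≠ y and positive degree
  have hxny : x ≠ y := by
    intro h; rw [h, SimpleGraph.dist_self] at hxy; norm_num at hxy
  have hdegpos : 0 < G.degree x := by
    rw [SimpleGraph.degree_pos_iff_exists_adj]
    obtain ⟨p⟩ := hGc.preconnected x y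
    cases p with
    | nil => exact absurd rfl hxny
    | cons h _ => exact ⟨_, h⟩
  have hb0 : 1 ≤ b 0 := by rw [← hdeg x]; exact hdegpos
  have hk1 : (1 : ℝ) ≤ k := by rw [hk]; exact_mod_cast hb0
  have ha1nn : 0 ≤ a1 := by rw [ha1]; positivity
  have ha3nn : 0 ≤ a3 := by rw [ha3]; positivity
  -- facts about μ
  have htnn : 0 ≤ a1 ^ 2 + 4 * k := by nlinarith
  have ht2 : t ^ 2 = a1 ^ 2 + 4 * k := Real.sq_sqrt htnn
  have htpos : 0 < t := by
    rw [hts]; apply Real.sqrt_pos.mpr; nlinarith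
  have hμpos : 0 < μ := by rw [hμs]; nlinarith
  have hμ2 : μ ^ 2 = a1 * μ + k := by rw [hμs]; nlinarith [ht2]
  set s : ℝ := k / μ with hss
  have hs : μ * s = k := by rw [hss]; field_simp
  have hspos : 0 < s := by rw [hss]; positivity
  have hsa : s + a1 = μ := by
    have h := hμ2
    rw [hss]
    field_simp
    nlinarith
  -- the far set
  set F : Finset V := univ.filter (fun z => G.dist x z = 3) with hF
  have hyF : y ∈ F := by rw [hF]; simp [hxy]
  set m : ℝ := (F.card : ℝ) with hm
  have hm1 : (1 : ℝ) ≤ m := by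
    rw [hm]
    have : 0 < F.card := Finset.card_pos.mpr ⟨y, hyF⟩
    exact_mod_cast this
  -- test vectors
  set u1 : V → ℝ := fun z => if z = x then s else if G.Adj x z then 1 else 0 with hu1
  set u2 : V → ℝ := fun z => if G.dist x z = 3 then 1 else 0 with hu2
  -- summation helpers
  have sum_u1 : ∀ g : V → ℝ, ∑ z : V, u1 z * g z = s * g x + ∑ z ∈ G.neighborFinset x, g z := by
    intro g
    rw [← Finset.add_sum_erase _ _ (mem_univ x)]
    congr 1
    · simp [hu1]
    · have hsub : ∑ z ∈ univ.erase x, u1 z * g z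
          = ∑ z ∈ univ.erase x, (if G.Adj x z then g z else 0) := by
        apply Finset.sum_congr rfl
        intro z hz
        have hzx : z ≠ x := (Finset.mem_erase.mp hz).1
        rw [hu1]
        simp only [hzx, if_neg hzx]
        by_cases h : G.Adj x z <;> simp [h]
      rw [hsub, Finset.sum_ite, Finset.sum_const_zero, add_zero]
      apply Finset.sum_congr _ (fun _ _ => rfl)
      ext z
      simp only [mem_filter, mem_erase, mem_univ, and_true, true_and, mem_neighborFinset]
      exact ⟨fun h => h.2, fun h => ⟨h.ne', h⟩⟩
  have sum_u2 : ∀ g : V → ℝ, ∑ z : V, u2 z * g z = ∑ z ∈ F, g z := by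
    intro g
    rw [hF]
    rw [Finset.sum_filter]
    apply Finset.sum_congr rfl
    intro z _
    rw [hu2]
    by_cases h : G.dist x z = 3 <;> simp [h]
  -- neighbor counts
  have hcount : ∀ (i : ℕ), i ≤ 3 → ∀ z : V, G.dist x z = i →
      ((G.neighborFinset z).filter (fun w => G.dist x w = i)).card = a i := by
    intro i hi z hz
    have h := hca i hi x z hz
    rw [natCard_set_eq'] at h
    rw [← h]
    congr 1
    ext w
    simp [mem_neighborFinset, and_comm]
  -- pointwise sums over neighborhoods
  have h1x : ∑ w ∈ G.neighborFinset x, u1 w = k := by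
    have : ∀ w ∈ G.neighborFinset x, u1 w = 1 := by
      intro w hw
      rw [mem_neighborFinset] at hw
      rw [hu1]
      simp [hw.ne', hw]
    rw [Finset.sum_congr rfl this, Finset.sum_const, nsmul_eq_mul, mul_one,
      SimpleGraph.card_neighborFinset_eq_degree, hdeg, hk]
  have h1n : ∀ z ∈ G.neighborFinset x, ∑ w ∈ G.neighborFinset z, u1 w = s + a1 := by
    intro z hz
    rw [mem_neighborFinset] at hz
    have hdz : G.dist x z = 1 := hone _ _ hz
    have hxmem : x ∈ G.neighborFinset z := by rw [mem_neighborFinset]; exact hz.symm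
    rw [← Finset.add_sum_erase _ _ hxmem]
    congr 1
    · simp [hu1]
    · have hsub : ∑ w ∈ (G.neighborFinset z).erase x, u1 w
          = ∑ w ∈ (G.neighborFinset z).erase x, (if G.Adj x w then (1:ℝ) else 0) := by
        apply Finset.sum_congr rfl
        intro w hw
        have hwx : w ≠ x := (Finset.mem_erase.mp hw).1
        rw [hu1]; simp [hwx]
      rw [hsub, Finset.sum_boole]
      have : ((G.neighborFinset z).erase x).filter (fun w => G.Adj x w)
          = (G.neighborFinset z).filter (fun w => G.dist x w = 1) := by
        ext w
        simp only [mem_filter, mem_erase, mem_neighborFinset]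
        constructor
        · rintro ⟨⟨hwx, hzw⟩, hxw⟩; exact ⟨hzw, hone _ _ hxw⟩
        · rintro ⟨hzw, hdw⟩
          have hxw : G.Adj x w := SimpleGraph.dist_eq_one_iff_adj.mp hdw
          exact ⟨⟨hxw.ne', hzw⟩, hxw⟩
      rw [this, hcount 1 (by norm_num) z hdz, ha1]
  have h2f : ∀ z ∈ F, ∑ w ∈ G.neighborFinset z, u2 w = a3 := by
    intro z hz
    rw [hF, mem_filter] at hz
    have hsub : ∑ w ∈ G.neighborFinset z, u2 w
        = ∑ w ∈ G.neighborFinset z, (if G.dist x w = 3 then (1:ℝ) else 0) := by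
      apply Finset.sum_congr rfl; intro w _; rw [hu2]
    rw [hsub, Finset.sum_boole, hcount 3 (by norm_num) z hz.2, ha3]
  have h1f : ∀ z ∈ F, ∑ w ∈ G.neighborFinset z, u1 w = 0 := by
    intro z hz
    rw [hF, mem_filter] at hz
    apply Finset.sum_eq_zero
    intro w hw
    rw [mem_neighborFinset] at hw
    rw [hu1]
    have hwx : w ≠ x := by
      intro h
      have h1 : G.dist x z = 1 := hone _ _ ((h ▸ hw).symm)
      rw [hz.2] at h1
      norm_num at h1
    have hnadj : ¬ G.Adj x w := by
      intro hadj
      have h1 : G.dist x w = 1 := hone _ _ hadj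
      have h2 : G.dist w z = 1 := hone _ _ hw.symm
      have h3 := hGc.dist_triangle (u := x) (v := w) (w := z)
      rw [h1, h2, hz.2] at h3
      norm_num at h3
    simp only [hu1]
    simp [hwx, hnadj]
  have h2x : ∑ w ∈ G.neighborFinset x, u2 w = 0 := by
    apply Finset.sum_eq_zero
    intro w hw
    rw [mem_neighborFinset] at hw
    simp only [hu2]
    simp [hone _ _ hw]
  have h2n : ∀ z ∈ G.neighborFinset x, ∑ w ∈ G.neighborFinset z, u2 w = 0 := by
    intro z hz
    rw [mem_neighborFinset] at hz
    apply Finset.sum_eq_zero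
    intro w hw
    rw [mem_neighborFinset] at hw
    have hd : G.dist x w ≠ 3 := by
      have h1 : G.dist x z = 1 := hone _ _ hz
      have h2 : G.dist z w = 1 := hone _ _ hw
      have h3 := hGc.dist_triangle (u := x) (v := z) (w := w)
      omega
    simp only [hu2]
    simp [hd]
  -- dot products
  set A : Matrix V V ℝ := G.adjMatrix ℝ with hA
  have hmv : ∀ (u : V → ℝ) (z : V), (A *ᵥ u) z = ∑ w ∈ G.neighborFinset z, u w :=
    fun u z => SimpleGraph.adjMatrix_mulVec_apply _ _ _
  have hnbx_card : (∑ z ∈ G.neighborFinset x, (1:ℝ)) = k := by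
    rw [Finset.sum_const, nsmul_eq_mul, mul_one,
      SimpleGraph.card_neighborFinset_eq_degree, hdeg, hk]
  have d11 : u1 ⬝ᵥ (A *ᵥ u1) = s * k + k * (s + a1) := by
    show (∑ z : V, u1 z * (A *ᵥ u1) z) = _
    rw [sum_u1]
    rw [hmv u1 x, h1x]
    have : ∑ z ∈ G.neighborFinset x, (A *ᵥ u1) z = ∑ z ∈ G.neighborFinset x, (s + a1) := by
      apply Finset.sum_congr rfl
      intro z hz
      rw [hmv u1 z, h1n z hz]
    rw [this, Finset.sum_const, nsmul_eq_mul,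
      SimpleGraph.card_neighborFinset_eq_degree, hdeg]
  have d1 : u1 ⬝ᵥ u1 = s * s + k := by
    show (∑ z : V, u1 z * u1 z) = _
    rw [sum_u1, h1x]
    congr 1
    rw [hu1]; simp
  have d22 : u2 ⬝ᵥ (A *ᵥ u2) = a3 * m := by
    show (∑ z : V, u2 z * (A *ᵥ u2) z) = _
    rw [sum_u2]
    have : ∑ z ∈ F, (A *ᵥ u2) z = ∑ z ∈ F, a3 := by
      apply Finset.sum_congr rfl
      intro z hz
      rw [hmv u2 z, h2f z hz]
    rw [this, Finset.sum_const, nsmul_eq_mul, hm, mul_comm]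
  have d2 : u2 ⬝ᵥ u2 = m := by
    show (∑ z : V, u2 z * u2 z) = _
    rw [sum_u2]
    have : ∑ z ∈ F, u2 z = ∑ z ∈ F, (1:ℝ) := by
      apply Finset.sum_congr rfl
      intro z hz
      rw [hF, mem_filter] at hz
      rw [hu2]; simp [hz.2]
    rw [this, Finset.sum_const, nsmul_eq_mul, mul_one, hm]
  have d12 : u1 ⬝ᵥ (A *ᵥ u2) = 0 := by
    show (∑ z : V, u1 z * (A *ᵥ u2) z) = _
    rw [sum_u1, hmv u2 x, h2x, mul_zero, zero_add]
    apply Finset.sum_eq_zero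
    intro z hz
    rw [hmv u2 z, h2n z hz]
  have d21 : u2 ⬝ᵥ (A *ᵥ u1) = 0 := by
    show (∑ z : V, u2 z * (A *ᵥ u1) z) = _
    rw [sum_u2]
    apply Finset.sum_eq_zero
    intro z hz
    rw [hmv u1 z, h1f z hz]
  have d12' : u1 ⬝ᵥ u2 = 0 := by
    show (∑ z : V, u1 z * u2 z) = _
    rw [sum_u1]
    have hu2x : u2 x = 0 := by rw [hu2]; simp [SimpleGraph.dist_self]
    rw [hu2x, mul_zero, zero_add]
    apply Finset.sum_eq_zero
    intro z hz
    rw [mem_neighborFinset] at hz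
    rw [hu2]
    simp [hone _ _ hz]
  have d21' : u2 ⬝ᵥ u1 = 0 := by rw [dotProduct_comm]; exact d12'
  have su1 : ∑ z : V, u1 z = s + k := by
    have := sum_u1 (fun _ => (1:ℝ))
    simp only [mul_one] at this
    rw [this, hnbx_card]
  have su2 : ∑ z : V, u2 z = m := by
    have := sum_u2 (fun _ => (1:ℝ))
    simp only [mul_one] at this
    rw [this, Finset.sum_const, nsmul_eq_mul, mul_one, hm]
  -- the test vector
  set v : V → ℝ := m • u1 + (-(s + k)) • u2 with hv
  have hvsum : ∑ z : V, v z = 0 := by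
    rw [hv]
    simp only [Pi.add_apply, Pi.smul_apply, smul_eq_mul]
    rw [Finset.sum_add_distrib, ← Finset.mul_sum, ← Finset.mul_sum, su1, su2]
    ring
  have hAmv : A *ᵥ v = m • (A *ᵥ u1) + (-(s + k)) • (A *ᵥ u2) := by
    rw [hv, Matrix.mulVec_add, Matrix.mulVec_smul, Matrix.mulVec_smul]
  have vAv : v ⬝ᵥ (A *ᵥ v) = m * m * (s * k + k * (s + a1)) + (s + k) * (s + k) * (a3 * m) := by
    rw [hAmv, hv]
    simp only [add_dotProduct, smul_dotProduct, dotProduct_add,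
      dotProduct_smul, smul_eq_mul, d11, d22, d12, d21]
    ring
  have vv : v ⬝ᵥ v = m * m * (s * s + k) + (s + k) * (s + k) * m := by
    rw [hv]
    simp only [add_dotProduct, smul_dotProduct, dotProduct_add,
      dotProduct_smul, smul_eq_mul, d1, d2, d12', d21']
    ring
  -- key equality
  have e1 : s * k + k * (s + a1) = μ * (s * s + k) := by
    linear_combination (-s) * hs + k * hsa
  set m' : ℝ := min μ a3 with hm'
  have hmin1 : m' ≤ μ := min_le_left _ _
  have hmin2 : m' ≤ a3 := min_le_right _ _
  have hmpos : (0:ℝ) < m := lt_of_lt_of_le one_pos hm1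
  have hssk : (0:ℝ) < s * s + k := by
    have := mul_self_nonneg s
    linarith
  have hp1 : (0:ℝ) ≤ m * m * (s * s + k) :=
    le_of_lt (mul_pos (mul_pos hmpos hmpos) hssk)
  have hp2 : (0:ℝ) ≤ (s + k) * (s + k) * m :=
    mul_nonneg (mul_self_nonneg _) (le_of_lt hmpos)
  have claim : m' * (v ⬝ᵥ v) ≤ v ⬝ᵥ (A *ᵥ v) := by
    rw [vAv, vv, e1]
    have key1 : m' * (m * m * (s * s + k)) ≤ μ * (m * m * (s * s + k)) :=
      mul_le_mul_of_nonneg_right hmin1 hp1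
    have key2 : m' * ((s + k) * (s + k) * m) ≤ a3 * ((s + k) * (s + k) * m) :=
      mul_le_mul_of_nonneg_right hmin2 hp2
    calc m' * (m * m * (s * s + k) + (s + k) * (s + k) * m)
        = m' * (m * m * (s * s + k)) + m' * ((s + k) * (s + k) * m) := by ring
      _ ≤ μ * (m * m * (s * s + k)) + a3 * ((s + k) * (s + k) * m) := add_le_add key1 key2
      _ = m * m * (μ * (s * s + k)) + (s + k) * (s + k) * (a3 * m) := by ring
  have hvvpos : 0 < v ⬝ᵥ v := by
    rw [vv]
    have h1 : (0:ℝ) < m * m * (s * s + k) := mul_pos (mul_pos hmpos hmpos) hssk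
    linarith
  have hray := rayleigh G hGc hdeg hθ1.2.2 v hvsum
  have hchain : m' * (v ⬝ᵥ v) ≤ θ1 * (v ⬝ᵥ v) := le_trans claim hray
  exact le_of_mul_le_mul_right hchain hvvpos
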